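/- Let L and L' be two polytopes of the same dimension with L ⊆ L' and conv(L ∩ Z^m) = conv(L' ∩ Z^m). If L' has the 2-hyperplane property, then so does L. -/

import Mathlib

/-- A point of `ℝ^m` with all coordinates integers. -/
def IsIntegerPoint {m : ℕ} (x : Fin m → ℝ) : Prop := ∀ i, ∃ n : ℤ, x i = (n : ℝ)

/-- A set `S ⊆ ℝ^m` is 2-partitionable if `|S| ≤ 1`, or `S` can be partitioned into
nonempty sets `S1`, `S2` lying respectively on the two boundary hyperplanes
`π·x = π0` and `π·x = π0 + 1` of some split. -/
def TwoPartitionable {m : ℕ} (S : Set (Fin m → ℝ)) : Prop :=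
  S.Subsingleton ∨ ∃ (π : Fin m → ℤ) (π0 : ℤ) (S1 S2 : Set (Fin m → ℝ)),
    S1.Nonempty ∧ S2.Nonempty ∧ S1 ∪ S2 = S ∧ Disjoint S1 S2 ∧
    (∀ x ∈ S1, ∑ i, (π i : ℝ) * x i = (π0 : ℝ)) ∧
    (∀ x ∈ S2, ∑ i, (π i : ℝ) * x i = (π0 : ℝ) + 1)

/-- `L_I`: the convex hull of the integer points of `L`. -/
noncomputable def intHull {m : ℕ} (L : Set (Fin m → ℝ)) : Set (Fin m → ℝ) :=
  convexHull ℝ {x ∈ L | IsIntegerPoint x}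

/-- `F` is a facet of `L`: a proper exposed face of dimension `dim L − 1`. -/
def IsFacetOf {m : ℕ} (L F : Set (Fin m → ℝ)) : Prop :=
  IsExposed ℝ L F ∧ F ≠ L ∧
    Module.finrank ℝ (affineSpan ℝ F).direction + 1 =
      Module.finrank ℝ (affineSpan ℝ L).direction

/-- `L` has the 2-hyperplane property: every face of `L_I` not contained in a facet of `L`
is 2-partitionable (i.e. its set of integer points is). -/
def TwoHyperplaneProperty {m : ℕ} (L : Set (Fin m → ℝ)) : Prop :=
  ∀ F, IsExposed ℝ (intHull L) F → (¬ ∃ G, IsFacetOf L G ∧ F ⊆ G) →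
    TwoPartitionable {x ∈ F | IsIntegerPoint x}



open Module in
private lemma hull_le {m : ℕ} {V : Finset (Fin m → ℝ)} (l : (Fin m → ℝ) →L[ℝ] ℝ) {c : ℝ}
    (h : ∀ v ∈ V, l v ≤ c) : ∀ x ∈ convexHull ℝ (V : Set (Fin m → ℝ)), l x ≤ c := by
  intro x hx
  have hs : convexHull ℝ (V : Set (Fin m → ℝ)) ⊆ {x | l x ≤ c} :=
    convexHull_min (fun v hv => h v hv) (convex_halfSpace_le l.toLinearMap.isLinear c)
  exact hs hx

open Module in
private lemma hull_eq {m : ℕ} {V : Finset (Fin m → ℝ)} (l : (Fin m → ℝ) →L[ℝ] ℝ) {c : ℝ}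
    (h : ∀ v ∈ V, l v = c) : ∀ x ∈ convexHull ℝ (V : Set (Fin m → ℝ)), l x = c := by
  intro x hx
  have hs : convexHull ℝ (V : Set (Fin m → ℝ)) ⊆ {x | l x = c} :=
    convexHull_min (fun v hv => h v hv) (convex_hyperplane l.toLinearMap.isLinear c)
  exact hs hx

open Module in
private lemma vectorSpan_le_ker {m : ℕ} {s : Set (Fin m → ℝ)} (l : (Fin m → ℝ) →L[ℝ] ℝ) {c : ℝ}
    (h : ∀ v ∈ s, l v = c) : vectorSpan ℝ s ≤ LinearMap.ker (l : (Fin m → ℝ) →ₗ[ℝ] ℝ) := by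
  rw [vectorSpan_def, Submodule.span_le]
  rintro x ⟨a, ha, b, hb, rfl⟩
  simp [LinearMap.mem_ker, vsub_eq_sub, map_sub, h a ha, h b hb]

open Module in
private lemma exists_ne_of_vectorSpan {m : ℕ} {s : Set (Fin m → ℝ)} (l : (Fin m → ℝ) →L[ℝ] ℝ)
    {w : Fin m → ℝ} (hw : w ∈ vectorSpan ℝ s) (hlw : l w ≠ 0) :
    ∃ v ∈ s, ∃ v' ∈ s, l v ≠ l v' := by
  by_contra hcon
  push_neg at hcon
  rcases s.eq_empty_or_nonempty with rfl | ⟨v0, hv0⟩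
  · rw [vectorSpan_empty] at hw
    exact hlw (by simpa using (Submodule.mem_bot ℝ).1 hw ▸ map_zero l)
  · have : vectorSpan ℝ s ≤ LinearMap.ker (l : (Fin m → ℝ) →ₗ[ℝ] ℝ) :=
      vectorSpan_le_ker l (c := l v0) (fun v hv => hcon v hv v0 hv0)
    exact hlw (this hw)

open Module in
private lemma finrank_inf_ker {m : ℕ} (W : Submodule ℝ (Fin m → ℝ)) (l : (Fin m → ℝ) →L[ℝ] ℝ) :
    finrank ℝ W ≤ finrank ℝ (W ⊓ LinearMap.ker (l : (Fin m → ℝ) →ₗ[ℝ] ℝ) : Submodule ℝ (Fin m → ℝ)) + 1 := by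
  classical
  set f : W →ₗ[ℝ] ℝ := (l : (Fin m → ℝ) →ₗ[ℝ] ℝ).comp W.subtype with hf
  have h1 : finrank ℝ (LinearMap.range f) + finrank ℝ (LinearMap.ker f) = finrank ℝ W :=
    LinearMap.finrank_range_add_finrank_ker f
  have h2 : finrank ℝ (LinearMap.range f) ≤ 1 := by
    simpa using (LinearMap.range f).finrank_le
  have h3 : finrank ℝ (LinearMap.ker f) =
      finrank ℝ (W ⊓ LinearMap.ker (l : (Fin m → ℝ) →ₗ[ℝ] ℝ) : Submodule ℝ (Fin m → ℝ)) := by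
    have hker : LinearMap.ker f = (LinearMap.ker (l : (Fin m → ℝ) →ₗ[ℝ] ℝ)).comap W.subtype := by
      rw [hf, LinearMap.ker_comp]
    rw [hker, ← Submodule.finrank_map_subtype_eq, Submodule.map_comap_subtype]
  omega

open Module in
private lemma exists_perp {m : ℕ} {U : Submodule ℝ (Fin m → ℝ)} {w : Fin m → ℝ} (hw : w ∉ U) :
    ∃ g : (Fin m → ℝ) →L[ℝ] ℝ, (∀ u ∈ U, g u = 0) ∧ g w ≠ 0 := by
  have hne : U.mkQ w ≠ 0 := by simpa [Submodule.Quotient.mk_eq_zero] using hw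
  obtain ⟨φ, hφ⟩ : ∃ φ : Module.Dual ℝ ((Fin m → ℝ) ⧸ U), φ (U.mkQ w) ≠ 0 := by
    by_contra hc; push_neg at hc
    exact hne ((Module.forall_dual_apply_eq_zero_iff ℝ _).mp hc)
  refine ⟨LinearMap.toContinuousLinearMap (φ.comp U.mkQ), ?_, by simpa using hφ⟩
  intro u hu
  simp [Submodule.Quotient.mk_eq_zero, (Submodule.Quotient.mk_eq_zero U).2 hu]

open Module in
private lemma mem_hull_filter {m : ℕ} {V : Finset (Fin m → ℝ)} (l : (Fin m → ℝ) →L[ℝ] ℝ) {c : ℝ}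
    (h : ∀ v ∈ V, l v ≤ c) {x : Fin m → ℝ}
    (hx : x ∈ convexHull ℝ (V : Set (Fin m → ℝ))) (hcx : c ≤ l x) :
    x ∈ convexHull ℝ ((V.filter fun v => l v = c) : Set (Fin m → ℝ)) := by
  classical
  rw [Finset.convexHull_eq] at hx
  obtain ⟨w, hw0, hw1, hwx⟩ := hx
  have hxsum : x = ∑ v ∈ V, w v • v := by
    rw [← hwx, Finset.centerMass_eq_of_sum_1 _ _ hw1]
    simp
  have hlx : l x = ∑ v ∈ V, w v * l v := by
    rw [hxsum, map_sum]
    simp [smul_eq_mul]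
  have hzero : ∀ v ∈ V, l v ≠ c → w v = 0 := by
    by_contra hcon
    push_neg at hcon
    obtain ⟨v, hvV, hvne, hvw⟩ := hcon
    have hwpos : 0 < w v := lt_of_le_of_ne (hw0 v hvV) (Ne.symm hvw)
    have hvlt : l v < c := lt_of_le_of_ne (h v hvV) hvne
    have hstrict : ∑ u ∈ V, w u * l u < ∑ u ∈ V, w u * c := by
      refine Finset.sum_lt_sum (fun i hi => mul_le_mul_of_nonneg_left (h i hi) (hw0 i hi))
        ⟨v, hvV, ?_⟩
      exact mul_lt_mul_of_pos_left hvlt hwpos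
    rw [← Finset.sum_mul, hw1, one_mul] at hstrict
    rw [hlx] at hcx
    linarith
  set V0 := V.filter fun v => l v = c with hV0
  have hwz : ∀ v ∈ V, v ∉ V0 → w v = 0 := by
    intro v hv hnv
    refine hzero v hv ?_
    simpa [hV0, Finset.mem_filter, hv] using hnv
  have hsub : V0 ⊆ V := Finset.filter_subset _ _
  have hsum0 : ∑ v ∈ V0, w v = 1 := by
    rw [← hw1]
    exact Finset.sum_subset hsub (fun v hv hnv => hwz v hv hnv)
  have hpt : ∑ v ∈ V0, w v • v = x := by
    rw [hxsum]
    exact Finset.sum_subset hsub (fun v hv hnv => by rw [hwz v hv hnv, zero_smul])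
  rw [Finset.convexHull_eq]
  refine ⟨w, fun y hy => hw0 y (hsub hy), hsum0, ?_⟩
  rw [Finset.centerMass_eq_of_sum_1 _ _ hsum0]
  simpa using hpt

open Module in
private lemma face_eq {m : ℕ} {V V0 : Finset (Fin m → ℝ)} {l : (Fin m → ℝ) →L[ℝ] ℝ} {c : ℝ}
    (hsub : V0 ⊆ V) (hne : V0.Nonempty)
    (hl0 : ∀ u ∈ V0, l u = c) (hl1 : ∀ v ∈ V, v ∉ V0 → l v < c) :
    convexHull ℝ (V0 : Set (Fin m → ℝ)) =
      {x ∈ convexHull ℝ (V : Set (Fin m → ℝ)) |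
        ∀ y ∈ convexHull ℝ (V : Set (Fin m → ℝ)), l y ≤ l x} := by
  classical
  have hmax : ∀ v ∈ V, l v ≤ c := by
    intro v hv
    by_cases hv0 : v ∈ V0
    · exact le_of_eq (hl0 v hv0)
    · exact le_of_lt (hl1 v hv hv0)
  have hfilt : V.filter (fun v => l v = c) = V0 := by
    ext v
    simp only [Finset.mem_filter]
    constructor
    · rintro ⟨hv, hvc⟩
      by_contra hnv
      exact absurd hvc (ne_of_lt (hl1 v hv hnv))
    · intro hv
      exact ⟨hsub hv, hl0 v hv⟩
  ext x
  constructor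
  · intro hx
    have hxV : x ∈ convexHull ℝ (V : Set (Fin m → ℝ)) :=
      convexHull_mono (by exact_mod_cast hsub) hx
    have hxc : l x = c := hull_eq l hl0 x hx
    exact ⟨hxV, fun y hy => (hull_le l hmax y hy).trans hxc.ge⟩
  · rintro ⟨hxV, hmaxx⟩
    obtain ⟨u0, hu0⟩ := hne
    have hc : c ≤ l x := by
      rw [← hl0 u0 hu0]
      exact hmaxx u0 (subset_convexHull ℝ _ (by exact_mod_cast hsub hu0))
    have := mem_hull_filter l hmax hxV hc
    rwa [hfilt] at this

open Module in
private lemma facet_above {m : ℕ} : ∀ (k : ℕ) (V V0 : Finset (Fin m → ℝ))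
    (l : (Fin m → ℝ) →L[ℝ] ℝ) (c : ℝ),
    (V \ V0).card ≤ k → V0 ⊆ V → V0.Nonempty → V0 ≠ V →
    (∀ u ∈ V0, l u = c) → (∀ v ∈ V, v ∉ V0 → l v < c) →
    ∃ H, IsFacetOf (convexHull ℝ (V : Set (Fin m → ℝ))) H ∧
      (convexHull ℝ (V0 : Set (Fin m → ℝ))) ⊆ H := by
  classical
  intro k
  induction k with
  | zero =>
    intro V V0 l c hcard hsub hne hneq _ _
    exfalso
    have hemp : V \ V0 = ∅ := Finset.card_eq_zero.mp (Nat.le_zero.mp hcard)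
    have : V ⊆ V0 := by
      intro v hv
      by_contra hnv
      exact (Finset.notMem_empty v) (hemp ▸ Finset.mem_sdiff.2 ⟨hv, hnv⟩)
    exact hneq (Finset.Subset.antisymm hsub this)
  | succ k ih =>
    intro V V0 l c hcard hsub hne hneq hl0 hl1
    obtain ⟨u0, hu0⟩ := hne
    obtain ⟨v1, hv1⟩ : (V \ V0).Nonempty := by
      rcases (V \ V0).eq_empty_or_nonempty with hemp | h
      · exfalso
        refine hneq (Finset.Subset.antisymm hsub (fun v hv => ?_))
        by_contra hnv
        exact (Finset.notMem_empty v) (hemp ▸ Finset.mem_sdiff.2 ⟨hv, hnv⟩)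
      · exact h
    rw [Finset.mem_sdiff] at hv1
    set U := vectorSpan ℝ (V0 : Set (Fin m → ℝ)) with hU
    set W := vectorSpan ℝ (V : Set (Fin m → ℝ)) with hW
    have hUW : U ≤ W := vectorSpan_mono ℝ (by exact_mod_cast hsub)
    have hUker : U ≤ LinearMap.ker (l : (Fin m → ℝ) →ₗ[ℝ] ℝ) := vectorSpan_le_ker l hl0
    have hWnker : ¬ W ≤ LinearMap.ker (l : (Fin m → ℝ) →ₗ[ℝ] ℝ) := by
      intro hWk
      have hmem : u0 - v1 ∈ W := by
        have := vsub_mem_vectorSpan ℝ (Finset.mem_coe.2 (hsub hu0)) (Finset.mem_coe.2 hv1.1)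
        simpa [vsub_eq_sub] using this
      have : l (u0 - v1) = 0 := hWk hmem
      rw [map_sub, hl0 u0 hu0] at this
      have h2 := hl1 v1 hv1.1 hv1.2
      linarith only [this, h2]
    have hUltW : finrank ℝ U < finrank ℝ W := by
      have h1 : U ≤ W ⊓ LinearMap.ker (l : (Fin m → ℝ) →ₗ[ℝ] ℝ) := le_inf hUW hUker
      have h2 : W ⊓ LinearMap.ker (l : (Fin m → ℝ) →ₗ[ℝ] ℝ) < W := inf_lt_left.2 hWnker
      exact Submodule.finrank_lt_finrank_of_lt (lt_of_le_of_lt h1 h2)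
    by_cases hdim : finrank ℝ U + 1 = finrank ℝ W
    · -- conv V0 is already a facet
      refine ⟨convexHull ℝ (V0 : Set (Fin m → ℝ)), ⟨?_, ?_, ?_⟩, subset_rfl⟩
      · intro _
        exact ⟨l, face_eq hsub ⟨u0, hu0⟩ hl0 hl1⟩
      · intro heq
        have hv1mem : v1 ∈ convexHull ℝ (V0 : Set (Fin m → ℝ)) :=
          heq.symm ▸ subset_convexHull ℝ _ (Finset.mem_coe.2 hv1.1)
        have ha := hull_eq l hl0 v1 hv1mem
        have hb := hl1 v1 hv1.1 hv1.2
        linarith only [ha, hb]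
      · rw [affineSpan_convexHull, affineSpan_convexHull, direction_affineSpan,
          direction_affineSpan, ← hU, ← hW]
        exact hdim
    · -- perturbation step
      have h2le : finrank ℝ U + 2 ≤ finrank ℝ W := by omega
      have hUltK : finrank ℝ U < finrank ℝ (W ⊓ LinearMap.ker (l : (Fin m → ℝ) →ₗ[ℝ] ℝ) : Submodule ℝ (Fin m → ℝ)) := by
        have := finrank_inf_ker W l
        omega
      have hUleK : U ≤ W ⊓ LinearMap.ker (l : (Fin m → ℝ) →ₗ[ℝ] ℝ) := le_inf hUW hUker
      have hUltK' : U < W ⊓ LinearMap.ker (l : (Fin m → ℝ) →ₗ[ℝ] ℝ) :=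
        lt_of_le_of_ne hUleK (fun h => by rw [h] at hUltK; omega)
      obtain ⟨w0, hw0K, hw0U⟩ := SetLike.exists_of_lt hUltK'
      have hw0W : w0 ∈ W := hw0K.1
      have hw0l : l w0 = 0 := hw0K.2
      obtain ⟨g0, hg0U, hg0w0⟩ := exists_perp hw0U
      -- adjust sign of g so that some vertex outside V0 has larger g value
      have key : ∃ (g : (Fin m → ℝ) →L[ℝ] ℝ) (c0 : ℝ), (∀ u ∈ V0, g u = c0) ∧ g w0 ≠ 0 ∧
          ∃ v ∈ V, v ∉ V0 ∧ c0 < g v := by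
        have hg0const : ∀ u ∈ V0, g0 u = g0 u0 := by
          intro u hu
          have hmem : u - u0 ∈ U := by
            have := vsub_mem_vectorSpan ℝ (Finset.mem_coe.2 hu) (Finset.mem_coe.2 hu0)
            simpa [vsub_eq_sub] using this
          have hz := hg0U _ hmem
          rw [map_sub] at hz
          linarith only [hz]
        obtain ⟨v, hv, v', hv', hne'⟩ := exists_ne_of_vectorSpan g0 hw0W hg0w0
        rw [Finset.mem_coe] at hv hv'
        have hvv' : ∃ vb ∈ V, g0 vb ≠ g0 u0 := by
          by_cases h : g0 v = g0 u0
          · exact ⟨v', hv', fun hc => hne' (h.trans hc.symm)⟩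
          · exact ⟨v, hv, h⟩
        obtain ⟨vb, hvbV, hvbne⟩ := hvv'
        have hvbnV0 : vb ∉ V0 := fun h => hvbne (hg0const vb h)
        rcases lt_or_gt_of_ne hvbne with hlt | hgt
        · refine ⟨-g0, -(g0 u0), fun u hu => by simp [hg0const u hu], by simpa using hg0w0,
            vb, hvbV, hvbnV0, by simpa using hlt⟩
        · exact ⟨g0, g0 u0, hg0const, hg0w0, vb, hvbV, hvbnV0, hgt⟩
      obtain ⟨g, c0, hgV0, hgw0, vb, hvbV, hvbnV0, hvbgt⟩ := key
      set T := (V \ V0).filter (fun v => c0 < g v) with hT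
      have hTne : T.Nonempty := ⟨vb, Finset.mem_filter.2 ⟨Finset.mem_sdiff.2 ⟨hvbV, hvbnV0⟩, hvbgt⟩⟩
      set t := T.inf' hTne (fun v => (c - l v) / (g v - c0)) with ht
      have hTprop : ∀ v ∈ T, v ∈ V ∧ v ∉ V0 ∧ c0 < g v := by
        intro v hv
        rw [hT, Finset.mem_filter, Finset.mem_sdiff] at hv
        exact ⟨hv.1.1, hv.1.2, hv.2⟩
      have htpos : 0 < t := by
        rw [ht, Finset.lt_inf'_iff]
        intro v hv
        obtain ⟨hvV, hvn, hvg⟩ := hTprop v hv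
        exact div_pos (by linarith only [hl1 v hvV hvn]) (by linarith only [hvg])
      obtain ⟨vh, hvhT, hvht⟩ := T.exists_mem_eq_inf' hTne (fun v => (c - l v) / (g v - c0))
      set φ := l + t • g with hφ
      set c' := c + t * c0 with hc'
      have hφu : ∀ u ∈ V0, φ u = c' := by
        intro u hu
        simp [hφ, hc', hl0 u hu, hgV0 u hu]
      have hφle : ∀ v ∈ V, φ v ≤ c' := by
        intro v hv
        by_cases hv0 : v ∈ V0
        · exact le_of_eq (hφu v hv0)
        · have hlv : l v < c := hl1 v hv hv0
          by_cases hgv : c0 < g v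
          · have hvT : v ∈ T := Finset.mem_filter.2 ⟨Finset.mem_sdiff.2 ⟨hv, hv0⟩, hgv⟩
            have hle : t ≤ (c - l v) / (g v - c0) := Finset.inf'_le _ hvT
            have hmul := (le_div_iff₀ (by linarith only [hgv] : (0:ℝ) < g v - c0)).1 hle
            simp only [hφ, hc', ContinuousLinearMap.add_apply, ContinuousLinearMap.smul_apply,
              smul_eq_mul]
            nlinarith only [hmul, hlv, htpos, hgv]
          · push_neg at hgv
            have hmul : t * g v ≤ t * c0 := mul_le_mul_of_nonneg_left hgv (le_of_lt htpos)
            simp only [hφ, hc', ContinuousLinearMap.add_apply, ContinuousLinearMap.smul_apply,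
              smul_eq_mul]
            linarith only [hmul, hlv]
      have hφvh : φ vh = c' := by
        obtain ⟨hvhV, hvhn, hvhg⟩ := hTprop vh hvhT
        have hteq : t = (c - l vh) / (g vh - c0) := ht.trans hvht
        have heq : t * (g vh - c0) = c - l vh := by
          rw [hteq]
          exact div_mul_cancel₀ _ (ne_of_gt (by linarith only [hvhg] : (0:ℝ) < g vh - c0))
        simp only [hφ, hc', ContinuousLinearMap.add_apply, ContinuousLinearMap.smul_apply,
          smul_eq_mul]
        nlinarith only [heq]
      set V0' := V.filter (fun v => φ v = c') with hV0'
      have hsub' : V0' ⊆ V := Finset.filter_subset _ _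
      have hV0sub : V0 ⊆ V0' := fun u hu => Finset.mem_filter.2 ⟨hsub hu, hφu u hu⟩
      have hvhmem : vh ∈ V0' := by
        obtain ⟨hvhV, _, _⟩ := hTprop vh hvhT
        exact Finset.mem_filter.2 ⟨hvhV, hφvh⟩
      have hvhnot : vh ∉ V0 := (hTprop vh hvhT).2.1
      have hφw0 : φ w0 ≠ 0 := by
        simp only [hφ, ContinuousLinearMap.add_apply, ContinuousLinearMap.smul_apply,
          smul_eq_mul, hw0l, zero_add]
        exact mul_ne_zero (ne_of_gt htpos) hgw0
      have hV0'ne : V0' ≠ V := by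
        intro h
        have hconst : ∀ v ∈ V, φ v = c' := by
          intro v hv
          have hv' : v ∈ V0' := by rw [h]; exact hv
          exact (Finset.mem_filter.1 hv').2
        obtain ⟨v, hv, v', hv', hneq'⟩ := exists_ne_of_vectorSpan φ hw0W hφw0
        rw [Finset.mem_coe] at hv hv'
        exact hneq' ((hconst v hv).trans (hconst v' hv').symm)
      have hcard' : (V \ V0').card ≤ k := by
        have hss : V \ V0' ⊂ V \ V0 := by
          refine ⟨Finset.sdiff_subset_sdiff subset_rfl hV0sub, fun hcon => ?_⟩
          have : vh ∈ V \ V0' := hcon (Finset.mem_sdiff.2 ⟨(hTprop vh hvhT).1, hvhnot⟩)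
          exact (Finset.mem_sdiff.1 this).2 hvhmem
        have := Finset.card_lt_card hss
        omega
      obtain ⟨H, hHf, hHsub⟩ := ih V V0' φ c' hcard' hsub' ⟨u0, hV0sub hu0⟩ hV0'ne
        (fun u hu => (Finset.mem_filter.1 hu).2)
        (fun v hv hnv => lt_of_le_of_ne (hφle v hv)
          (fun hc => hnv (Finset.mem_filter.2 ⟨hv, hc⟩)))
      exact ⟨H, hHf, (convexHull_mono (by exact_mod_cast hV0sub)).trans hHsub⟩

open Module in
private lemma exposed_subset_facet {m : ℕ} {V : Finset (Fin m → ℝ)} {G : Set (Fin m → ℝ)}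
    (hG : IsExposed ℝ (convexHull ℝ (V : Set (Fin m → ℝ))) G) (hne : G.Nonempty)
    (hneq : G ≠ convexHull ℝ (V : Set (Fin m → ℝ))) :
    ∃ H, IsFacetOf (convexHull ℝ (V : Set (Fin m → ℝ))) H ∧ G ⊆ H := by
  classical
  obtain ⟨l, hl⟩ := hG hne
  have hVne : V.Nonempty := by
    rcases V.eq_empty_or_nonempty with rfl | h
    · exfalso
      obtain ⟨x, hx⟩ := hne
      rw [hl] at hx
      simpa using hx.1
    · exact h
  set c := V.sup' hVne (fun v => l v) with hc
  have hmax : ∀ v ∈ V, l v ≤ c := fun v hv => Finset.le_sup' _ hv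
  obtain ⟨v0, hv0V, hv0⟩ := V.exists_mem_eq_sup' hVne (fun v => l v)
  set V0 := V.filter (fun v => l v = c) with hV0
  have hv0mem : v0 ∈ V0 := Finset.mem_filter.2 ⟨hv0V, hv0.symm⟩
  have hV0neq : V0 ≠ V := by
    intro h
    apply hneq
    rw [hl]
    have hconst : ∀ x ∈ convexHull ℝ (V : Set (Fin m → ℝ)), l x = c := by
      intro x hx
      have hs : convexHull ℝ (V : Set (Fin m → ℝ)) ⊆ {x | l x = c} :=
        convexHull_min (fun v hv => (Finset.mem_filter.1 (h ▸ Finset.mem_coe.1 hv)).2)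
          (convex_hyperplane l.toLinearMap.isLinear c)
      exact hs hx
    ext x
    refine ⟨fun hx => hx.1, fun hx => ⟨hx, fun y hy => ?_⟩⟩
    rw [hconst x hx, hconst y hy]
  obtain ⟨H, hHf, hHsub⟩ := facet_above (V \ V0).card V V0 l c le_rfl
    (Finset.filter_subset _ _) ⟨v0, hv0mem⟩ hV0neq
    (fun u hu => (Finset.mem_filter.1 hu).2)
    (fun v hv hnv => lt_of_le_of_ne (hmax v hv)
      (fun hceq => hnv (Finset.mem_filter.2 ⟨hv, hceq⟩)))
  refine ⟨H, hHf, fun x hx => ?_⟩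
  rw [hl] at hx
  apply hHsub
  have hcle : c ≤ l x := by
    rw [hc, hv0]
    exact hx.2 v0 (subset_convexHull ℝ _ (Finset.mem_coe.2 hv0V))
  exact mem_hull_filter l hmax hx.1 hcle


/-- **Observation `OBS:2-hyperplane`.** If `L ⊆ L'` are polytopes of the same
dimension with `conv(L ∩ ℤ^m) = conv(L' ∩ ℤ^m)` and `L'` has the 2-hyperplane property,
then so does `L`. -/
theorem stmt_7 {m : ℕ} (L L' : Set (Fin m → ℝ))
    (VL VL' : Finset (Fin m → ℝ))
    (hL : L = convexHull ℝ (VL : Set _)) (hL' : L' = convexHull ℝ (VL' : Set _))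
    (hdim : Module.finrank ℝ (affineSpan ℝ L).direction =
      Module.finrank ℝ (affineSpan ℝ L').direction)
    (hsub : L ⊆ L') (hI : intHull L = intHull L')
    (h2 : TwoHyperplaneProperty L') : TwoHyperplaneProperty L := by
  intro F hF hnofacet
  rcases F.eq_empty_or_nonempty with rfl | hFne
  · left
    rintro x ⟨hx, -⟩
    exact absurd hx (Set.notMem_empty x)
  · have hFsub : F ⊆ intHull L := hF.subset
    have hintL : intHull L ⊆ L := by
      conv_rhs => rw [hL]
      exact convexHull_min (fun x hx => by rw [← hL]; exact hx.1) (by rw [← hL]; exact hL ▸ convex_convexHull ℝ _)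
    have hF' : IsExposed ℝ (intHull L') F := hI ▸ hF
    apply h2 F hF'
    rintro ⟨G', ⟨hexp', hneq', hdim'⟩, hFG'⟩
    have hG'ne : G'.Nonempty := hFne.mono hFG'
    obtain ⟨l, hG'eq⟩ := hexp' hG'ne
    set G : Set (Fin m → ℝ) := {x ∈ L | ∀ y ∈ L, l y ≤ l x} with hGdef
    have hFG : F ⊆ G := by
      intro x hx
      have hxL : x ∈ L := hintL (hFsub hx)
      have hxG' := hFG' hx
      rw [hG'eq] at hxG'
      exact ⟨hxL, fun y hy => hxG'.2 y (hsub hy)⟩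
    have hGexp : IsExposed ℝ L G := fun _ => ⟨l, rfl⟩
    have hGne : G.Nonempty := hFne.mono hFG
    have hGneq : G ≠ L := by
      intro hGL
      obtain ⟨x1, hx1F⟩ := hFne
      have hx1G' := hFG' hx1F
      rw [hG'eq] at hx1G'
      have hLG' : L ⊆ G' := by
        intro x hxL
        have hxG : x ∈ G := hGL.symm ▸ hxL
        rw [hG'eq]
        refine ⟨hsub hxL, fun y hy => ?_⟩
        have h1 : l y ≤ l x1 := hx1G'.2 y hy
        have h2 : l x1 ≤ l x := hxG.2 x1 (hintL (hFsub hx1F))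
        linarith
      have hdirle : (affineSpan ℝ L).direction ≤ (affineSpan ℝ G').direction :=
        AffineSubspace.direction_le (affineSpan_mono ℝ hLG')
      have hrk := Submodule.finrank_mono hdirle
      omega
    rw [hL] at hGexp hGneq
    obtain ⟨H, hHf, hGH⟩ := exposed_subset_facet hGexp hGne hGneq
    exact hnofacet ⟨H, by rwa [hL], hFG.trans hGH⟩
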